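/- For every n ≥ 1 and all j, k ∈ ℕ, the number of n-element subsets S of ℕ×ℕ whose first coordinates sum to j and whose second coordinates sum to k equals the number of triples (σ, λ, μ), where σ is a permutation of {1,…,n} and λ, μ are partitions with at most n parts, such that maj(σ) + |λ| = j and (n(n−1)/2 − maj(σ^{-1})) + |μ| = k. -/

import Mathlib

attribute [local instance] Classical.propDecidable

/-- The set of (1-based) descents of a permutation `σ` of `{1,…,n}`. -/
noncomputable def descSet {n : ℕ} (σ : Equiv.Perm (Fin n)) : Finset ℕ :=
  (Finset.range n).filter fun i =>
    ∃ (_ : 1 ≤ i) (h2 : i < n),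
      σ ⟨i, h2⟩ < σ ⟨i - 1, Nat.lt_of_le_of_lt (Nat.sub_le i 1) h2⟩

/-- Major index: the sum of the descents. -/
noncomputable def maj {n : ℕ} (σ : Equiv.Perm (Fin n)) : ℕ := ∑ i ∈ descSet σ, i

/-- Partitions with at most `n` parts: antitone vectors in `ℕ^n`. -/
def PartN (n : ℕ) := {l : Fin n → ℕ // ∀ i j : Fin n, i ≤ j → l j ≤ l i}

namespace Stmt18

variable {n : ℕ}

lemma descSet_subset (σ : Equiv.Perm (Fin n)) : descSet σ ⊆ Finset.range n :=
  Finset.filter_subset _ _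

lemma mem_descSet_succ {σ : Equiv.Perm (Fin n)} {i : ℕ} (h : i + 1 < n) :
    (i + 1) ∈ descSet σ ↔ σ ⟨i + 1, h⟩ < σ ⟨i, by omega⟩ := by
  simp only [descSet, Finset.mem_filter, Finset.mem_range]
  constructor
  · rintro ⟨-, -, h2, hlt⟩; exact hlt
  · intro hlt; exact ⟨h, by omega, h, hlt⟩

/-- ascent set -/
noncomputable def ascSet (σ : Equiv.Perm (Fin n)) : Finset ℕ := Finset.range n \ descSet σ

lemma ascSet_subset (σ : Equiv.Perm (Fin n)) : ascSet σ ⊆ Finset.range n :=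
  Finset.sdiff_subset

lemma mem_ascSet_succ {σ : Equiv.Perm (Fin n)} {i : ℕ} (h : i + 1 < n) :
    (i + 1) ∈ ascSet σ ↔ σ ⟨i, by omega⟩ < σ ⟨i + 1, h⟩ := by
  rw [ascSet, Finset.mem_sdiff, Finset.mem_range, mem_descSet_succ h]
  constructor
  · rintro ⟨-, hnd⟩
    refine lt_of_le_of_ne (not_lt.1 hnd) fun he => ?_
    have := σ.injective he
    simp [Fin.ext_iff] at this
  · intro hlt; exact ⟨h, not_lt.2 hlt.le⟩

lemma mem_descSet_of_not_asc {σ : Equiv.Perm (Fin n)} {r : ℕ} (hr : r < n)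
    (h : r ∉ ascSet σ) : r ∈ descSet σ := by
  rw [ascSet, Finset.mem_sdiff, Finset.mem_range] at h
  tauto

lemma sum_ascSet_add_maj (σ : Equiv.Perm (Fin n)) :
    ∑ r ∈ ascSet σ, r + maj σ = n * (n - 1) / 2 := by
  rw [maj, ascSet, Finset.sum_sdiff (descSet_subset σ), Finset.sum_range_id]

lemma card_filter_univ_lt {d : ℕ} (hd : d < n) :
    (Finset.univ.filter fun i : Fin n => (i : ℕ) < d).card = d := by
  have he : (Finset.univ.filter fun i : Fin n => (i : ℕ) < d) = Finset.Iio ⟨d, hd⟩ := by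
    ext i; simp [Fin.lt_def]
  rw [he, Fin.card_Iio]

lemma sum_card_filter (P : Finset ℕ) (hP : P ⊆ Finset.range n) :
    ∑ i : Fin n, (P.filter fun d => (i : ℕ) < d).card = ∑ d ∈ P, d := by
  simp_rw [Finset.card_filter]
  rw [Finset.sum_comm]
  refine Finset.sum_congr rfl fun d hd => ?_
  rw [← Finset.card_filter]
  exact card_filter_univ_lt (Finset.mem_range.1 (hP hd))

lemma card_filter_lt_succ (P : Finset ℕ) (i : ℕ) :
    (P.filter fun d => i < d).card
      = (P.filter fun d => i + 1 < d).card + (if i + 1 ∈ P then 1 else 0) := by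
  have hsplit : (P.filter fun d => i < d)
      = (P.filter fun d => i + 1 < d) ∪ (P.filter fun d => d = i + 1) := by
    ext d
    simp only [Finset.mem_filter, Finset.mem_union]
    constructor
    · rintro ⟨hd, hlt⟩
      by_cases hc : d = i + 1
      · exact Or.inr ⟨hd, hc⟩
      · exact Or.inl ⟨hd, by omega⟩
    · rintro (⟨hd, hlt⟩ | ⟨hd, he⟩) <;> exact ⟨hd, by omega⟩
  have hdisj : Disjoint (P.filter fun d => i + 1 < d) (P.filter fun d => d = i + 1) := by
    rw [Finset.disjoint_left]
    rintro a ha hb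
    rw [Finset.mem_filter] at ha hb
    omega
  rw [hsplit, Finset.card_union_of_disjoint hdisj, Finset.filter_eq']
  split_ifs <;> simp

/-- chain of descents forces decrease -/
lemma chain_desc {σ : Equiv.Perm (Fin n)} :
    ∀ (d : ℕ) (u u' : Fin n), (u : ℕ) + d = (u' : ℕ) →
      (∀ r : ℕ, (u : ℕ) < r → r ≤ (u' : ℕ) → r ∈ descSet σ) →
      σ u' ≤ σ u := by
  intro d
  induction d with
  | zero =>
    intro u u' he _
    obtain rfl : u = u' := Fin.ext (by omega)
    exact le_rfl
  | succ d ih =>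
    intro u u' he hall
    have hw : (u : ℕ) + 1 < n := by omega
    set w : Fin n := ⟨(u : ℕ) + 1, hw⟩ with hwdef
    have h1 : σ w < σ u := by
      have := (mem_descSet_succ (σ := σ) hw).1 (hall ((u : ℕ) + 1) (by omega) (by omega))
      simpa [Fin.eta] using this
    have h2 : σ u' ≤ σ w := by
      refine ih w u' (by simp [hwdef]; omega) fun r hr1 hr2 => hall r (by simp [hwdef] at hr1; omega) hr2
    exact le_trans h2 h1.le

lemma chain_desc_strict {σ : Equiv.Perm (Fin n)} {u u' : Fin n} (hu : u < u')
    (hall : ∀ r : ℕ, (u : ℕ) < r → r ≤ (u' : ℕ) → r ∈ descSet σ) :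
    σ u' < σ u := by
  have hw : (u : ℕ) + 1 < n := by omega
  set w : Fin n := ⟨(u : ℕ) + 1, hw⟩ with hwdef
  have h1 : σ w < σ u := by
    have := (mem_descSet_succ (σ := σ) hw).1 (hall ((u : ℕ) + 1) (by omega) (by omega))
    simpa [Fin.eta] using this
  have h2 : σ u' ≤ σ w := by
    refine chain_desc ((u' : ℕ) - (u : ℕ) - 1) w u' (by simp [hwdef]; omega)
      fun r hr1 hr2 => hall r (by simp [hwdef] at hr1; omega) hr2
  exact lt_of_le_of_lt h2 h1



/-- The Garsia–Gessel style map from triples to sequences of pairs. -/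
noncomputable def Fmap (n : ℕ) (t : Equiv.Perm (Fin n) × PartN n × PartN n) :
    Fin n → ℕ × ℕ := fun i =>
  (t.2.1.1 i + ((descSet t.1).filter fun d => (i : ℕ) < d).card,
   t.2.2.1 (t.1 i) + ((ascSet t.1⁻¹).filter fun r => ((t.1 i : Fin n) : ℕ) < r).card)

noncomputable def Wfun (t : Equiv.Perm (Fin n) × PartN n × PartN n) (v : Fin n) : ℕ :=
  t.2.2.1 v + ((ascSet t.1⁻¹).filter fun r => (v : ℕ) < r).card

lemma Fmap_snd (t : Equiv.Perm (Fin n) × PartN n × PartN n) (i : Fin n) :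
    (Fmap n t i).2 = Wfun t (t.1 i) := rfl

lemma Wfun_anti (t : Equiv.Perm (Fin n) × PartN n × PartN n) :
    ∀ v v' : Fin n, v ≤ v' → Wfun t v' ≤ Wfun t v := by
  intro v v' h
  refine Nat.add_le_add (t.2.2.2 v v' h) (Finset.card_le_card ?_)
  intro r hr
  rw [Finset.mem_filter] at hr ⊢
  exact ⟨hr.1, lt_of_le_of_lt (Fin.le_def.1 h) hr.2⟩

lemma Wfun_lt_of_inv_lt (t : Equiv.Perm (Fin n) × PartN n × PartN n) {u u' : Fin n}
    (hu : u < u') (hinv : t.1⁻¹ u < t.1⁻¹ u') : Wfun t u' < Wfun t u := by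
  have hex : ∃ r ∈ ascSet t.1⁻¹, (u : ℕ) < r ∧ r ≤ (u' : ℕ) := by
    by_contra hne
    push_neg at hne
    have hall : ∀ r : ℕ, (u : ℕ) < r → r ≤ (u' : ℕ) → r ∈ descSet t.1⁻¹ := by
      intro r h1 h2
      refine mem_descSet_of_not_asc (by omega) fun hr => ?_
      have := hne r hr
      omega
    exact absurd (chain_desc_strict hu hall) (not_lt.2 hinv.le)
  obtain ⟨r, hrA, hr1, hr2⟩ := hex
  have hcard : ((ascSet t.1⁻¹).filter fun s => (u' : ℕ) < s).card
      < ((ascSet t.1⁻¹).filter fun s => (u : ℕ) < s).card := by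
    refine Finset.card_lt_card ?_
    rw [Finset.ssubset_iff_of_subset]
    · refine ⟨r, Finset.mem_filter.2 ⟨hrA, hr1⟩, fun hmem => ?_⟩
      rw [Finset.mem_filter] at hmem
      omega
    · intro s hs
      rw [Finset.mem_filter] at hs ⊢
      exact ⟨hs.1, lt_of_le_of_lt (Fin.le_def.1 hu.le) hs.2⟩
  exact Nat.add_lt_add_of_le_of_lt (t.2.2.2 u u' hu.le) hcard

lemma inv_gt_of_Wfun_eq (t : Equiv.Perm (Fin n) × PartN n × PartN n) {u u' : Fin n}
    (hu : u < u') (heq : Wfun t u' = Wfun t u) : t.1⁻¹ u' < t.1⁻¹ u := by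
  rcases lt_or_ge (t.1⁻¹ u') (t.1⁻¹ u) with h | h
  · exact h
  · exfalso
    have hne : t.1⁻¹ u ≠ t.1⁻¹ u' := fun e => (ne_of_lt hu) (t.1⁻¹.injective e)
    have := Wfun_lt_of_inv_lt t hu (lt_of_le_of_ne h hne)
    omega

lemma sigma_lt_iff (t : Equiv.Perm (Fin n) × PartN n × PartN n) (i j : Fin n) :
    t.1 i < t.1 j ↔
      ((Fmap n t j).2 < (Fmap n t i).2 ∨ ((Fmap n t i).2 = (Fmap n t j).2 ∧ j < i)) := by
  rw [Fmap_snd, Fmap_snd]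
  constructor
  · intro h
    rcases eq_or_lt_of_le (Wfun_anti t _ _ h.le) with he | hlt
    · right
      refine ⟨he.symm, ?_⟩
      have := inv_gt_of_Wfun_eq t h he
      simpa using this
    · exact Or.inl hlt
  · intro h
    rcases lt_trichotomy (t.1 i) (t.1 j) with hlt | he | hgt
    · exact hlt
    · obtain rfl : i = j := t.1.injective he
      rcases h with h | ⟨-, h⟩ <;> exact absurd h (lt_irrefl _)
    · exfalso
      rcases eq_or_lt_of_le (Wfun_anti t _ _ hgt.le) with he2 | hlt2
      · have := inv_gt_of_Wfun_eq t hgt he2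
        simp only [Equiv.Perm.coe_inv, Equiv.symm_apply_apply] at this
        rcases h with h | ⟨heq, hji⟩
        · omega
        · exact absurd this (not_lt.2 hji.le)
      · rcases h with h | ⟨heq, hji⟩
        · omega
        · omega


lemma Fmap_sum_fst (t : Equiv.Perm (Fin n) × PartN n × PartN n) :
    ∑ i : Fin n, (Fmap n t i).1 = maj t.1 + ∑ i : Fin n, t.2.1.1 i := by
  simp only [Fmap]
  rw [Finset.sum_add_distrib, sum_card_filter _ (descSet_subset t.1), maj]
  ring

lemma Fmap_sum_snd (t : Equiv.Perm (Fin n) × PartN n × PartN n) :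
    ∑ i : Fin n, (Fmap n t i).2 = (n * (n - 1) / 2 - maj t.1⁻¹) + ∑ i : Fin n, t.2.2.1 i := by
  simp only [Fmap]
  rw [Finset.sum_add_distrib]
  have h1 : ∑ i : Fin n, t.2.2.1 (t.1 i) = ∑ v : Fin n, t.2.2.1 v :=
    Equiv.sum_comp t.1 _
  have h2 : ∑ i : Fin n, ((ascSet t.1⁻¹).filter fun r => ((t.1 i : Fin n) : ℕ) < r).card
      = ∑ v : Fin n, ((ascSet t.1⁻¹).filter fun r => (v : ℕ) < r).card :=
    Equiv.sum_comp t.1 (fun v => ((ascSet t.1⁻¹).filter fun r => (v : ℕ) < r).card)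
  rw [h1, h2, sum_card_filter _ (ascSet_subset t.1⁻¹)]
  have h3 := sum_ascSet_add_maj t.1⁻¹
  omega

lemma Fmap_strictAnti (t : Equiv.Perm (Fin n) × PartN n × PartN n) :
    StrictAnti fun i => toLex (Fmap n t i) := by
  cases n with
  | zero => intro a; exact a.elim0
  | succ nn =>
    rw [Fin.strictAnti_iff_succ_lt]
    intro i
    have hiv : ((i.succ : Fin (nn + 1)) : ℕ) = (i : ℕ) + 1 := Fin.val_succ i
    have hcv : ((i.castSucc : Fin (nn + 1)) : ℕ) = (i : ℕ) := Fin.coe_castSucc i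
    have hsplit := card_filter_lt_succ (descSet t.1) (i : ℕ)
    have hlanti : t.2.1.1 i.succ ≤ t.2.1.1 i.castSucc :=
      t.2.1.2 _ _ (Fin.castSucc_lt_succ (i := i)).le
    have hXle : (Fmap (nn + 1) t i.succ).1 ≤ (Fmap (nn + 1) t i.castSucc).1 := by
      simp only [Fmap, hiv, hcv]
      omega
    rw [Prod.Lex.lt_iff]
    rcases lt_or_eq_of_le hXle with hXlt | hXeq
    · exact Or.inl hXlt
    · right
      refine ⟨hXeq, ?_⟩
      have hnd : ((i : ℕ) + 1) ∉ descSet t.1 := by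
        intro hd
        simp only [Fmap, hiv, hcv] at hXeq
        rw [hsplit, if_pos hd] at hXeq
        omega
      have hlt : t.1 i.castSucc < t.1 i.succ := by
        have h2 : (i : ℕ) + 1 < nn + 1 := by omega
        have := (mem_descSet_succ (σ := t.1) h2).not.1 hnd
        have hne : t.1 ⟨(i : ℕ), by omega⟩ ≠ t.1 ⟨(i : ℕ) + 1, h2⟩ := by
          intro he
          have := t.1.injective he
          simp [Fin.ext_iff] at this
        have hle := lt_of_le_of_ne (not_lt.1 this) hne
        have e1 : (⟨(i : ℕ) + 1, h2⟩ : Fin (nn + 1)) = i.succ := Fin.ext (by simp)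
        have e2 : (⟨(i : ℕ), by omega⟩ : Fin (nn + 1)) = i.castSucc := Fin.ext (by simp)
        rwa [e1, e2] at hle
      have := (sigma_lt_iff t i.castSucc i.succ).1 hlt
      rcases this with h | ⟨-, hji⟩
      · exact h
      · exact absurd hji (not_lt.2 (Fin.castSucc_lt_succ (i := i)).le)


lemma Fmap_injective : Function.Injective (Fmap n) := by
  rintro ⟨σ, l, m⟩ ⟨σ', l', m'⟩ h
  have hchar : ∀ i j : Fin n, σ i < σ j ↔ σ' i < σ' j := by
    intro i j
    rw [sigma_lt_iff (σ, l, m) i j, sigma_lt_iff (σ', l', m') i j, h]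
  have hσ : σ = σ' := by
    have hm1 : StrictMono (fun v => σ' (σ.symm v)) := fun a b hab => by
      rw [← hchar]; simpa using hab
    have hm2 : StrictMono (fun v => σ (σ'.symm v)) := fun a b hab => by
      rw [hchar]; simpa using hab
    have inst : WellFoundedLT (Fin n) := inferInstance
    refine Equiv.ext fun w => ?_
    have h1 : σ w ≤ σ' (σ.symm (σ w)) := @StrictMono.le_apply (Fin n) _ inst _ hm1 (σ w)
    have h2 : σ' w ≤ σ (σ'.symm (σ' w)) := @StrictMono.le_apply (Fin n) _ inst _ hm2 (σ' w)
    simp only [Equiv.symm_apply_apply] at h1 h2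
    exact le_antisymm h1 h2
  subst hσ
  have hfst : ∀ i, l.1 i = l'.1 i := by
    intro i
    have h1 := congrArg Prod.fst (congrFun h i)
    simp only [Fmap] at h1
    omega
  have hsnd : ∀ v, m.1 v = m'.1 v := by
    intro v
    have h1 := congrArg Prod.snd (congrFun h (σ.symm v))
    simp only [Fmap, Equiv.apply_symm_apply] at h1
    omega
  simp only [Prod.mk.injEq]
  exact ⟨trivial, Subtype.ext (funext hfst), Subtype.ext (funext hsnd)⟩


lemma antitone_of_succ (f : Fin n → ℕ)
    (h : ∀ (i : ℕ) (hi : i + 1 < n), f ⟨i + 1, hi⟩ ≤ f ⟨i, by omega⟩) :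
    ∀ i j : Fin n, i ≤ j → f j ≤ f i := by
  have key : ∀ (jv : ℕ) (hj : jv < n) (i : Fin n), (i : ℕ) ≤ jv → f ⟨jv, hj⟩ ≤ f i := by
    intro jv
    induction jv with
    | zero =>
      intro hj i hi
      have he : i = ⟨0, hj⟩ := Fin.ext (by simp; omega)
      exact le_of_eq (congrArg f he.symm)
    | succ jv ih =>
      intro hj i hi
      rcases Nat.lt_or_ge (i : ℕ) (jv + 1) with hlt | hge
      · exact le_trans (h jv hj) (ih (by omega) i (by omega))
      · have he : i = ⟨jv + 1, hj⟩ := Fin.ext (by simp; omega)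
        exact le_of_eq (congrArg f he.symm)
  intro i j hij
  have := key (j : ℕ) j.2 i (Fin.le_def.1 hij)
  simpa [Fin.eta] using this

lemma card_bound (P : Finset ℕ) (hP : P ⊆ Finset.range n) (f : Fin n → ℕ)
    (hstep : ∀ (i : ℕ) (hi : i + 1 < n), f ⟨i + 1, hi⟩ ≤ f ⟨i, by omega⟩)
    (hstrict : ∀ (i : ℕ) (hi : i + 1 < n), (i + 1) ∈ P → f ⟨i + 1, hi⟩ < f ⟨i, by omega⟩) :
    ∀ i : Fin n, (P.filter fun d => (i : ℕ) < d).card ≤ f i := by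
  intro i
  have hi2 := i.2
  have key : ∀ (jv : ℕ) (hj : jv < n), (i : ℕ) ≤ jv →
      (P.filter fun d => (i : ℕ) < d ∧ d ≤ jv).card + f ⟨jv, hj⟩ ≤ f i := by
    intro jv
    induction jv with
    | zero =>
      intro hj hi
      have hi0 : i = ⟨0, hj⟩ := Fin.ext (by simp; omega)
      have he : (P.filter fun d => (i : ℕ) < d ∧ d ≤ 0) = ∅ := by
        ext d; simp; omega
      rw [he, hi0]; simp
    | succ jv ih =>
      intro hj hi
      rcases Nat.lt_or_ge (i : ℕ) (jv + 1) with hlt | hge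
      · have hsub : (P.filter fun d => (i : ℕ) < d ∧ d ≤ jv + 1)
            ⊆ (P.filter fun d => (i : ℕ) < d ∧ d ≤ jv) ∪ (P.filter fun d => d = jv + 1) := by
          intro d hd
          simp only [Finset.mem_filter, Finset.mem_union] at hd ⊢
          by_cases hc : d = jv + 1
          · exact Or.inr ⟨hd.1, hc⟩
          · exact Or.inl ⟨hd.1, hd.2.1, by omega⟩
        have hcard : (P.filter fun d => (i : ℕ) < d ∧ d ≤ jv + 1).card ≤
            (P.filter fun d => (i : ℕ) < d ∧ d ≤ jv).card + (if jv + 1 ∈ P then 1 else 0) := by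
          refine le_trans (Finset.card_le_card hsub) ?_
          refine le_trans (Finset.card_union_le _ _) ?_
          rw [Finset.filter_eq']
          split_ifs <;> simp
        have hf : f ⟨jv + 1, hj⟩ + (if jv + 1 ∈ P then 1 else 0) ≤ f ⟨jv, by omega⟩ := by
          split_ifs with hmem
          · have := hstrict jv hj hmem; omega
          · have := hstep jv hj; omega
        have := ih (by omega) (by omega)
        omega
      · have hi1 : i = ⟨jv + 1, hj⟩ := Fin.ext (by simp; omega)
        have he : (P.filter fun d => (i : ℕ) < d ∧ d ≤ jv + 1) = ∅ := by
          ext d; simp; omega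
        rw [he, hi1]; simp
  have hn1 : n - 1 < n := by omega
  have heq : (P.filter fun d => (i : ℕ) < d) = (P.filter fun d => (i : ℕ) < d ∧ d ≤ n - 1) := by
    ext d
    simp only [Finset.mem_filter]
    constructor
    · rintro ⟨hd, hlt⟩
      have := Finset.mem_range.1 (hP hd)
      exact ⟨hd, hlt, by omega⟩
    · rintro ⟨hd, hlt, -⟩; exact ⟨hd, hlt⟩
  have := key (n - 1) hn1 (by omega)
  rw [heq]; omega

lemma sub_antitone (P : Finset ℕ) (hP : P ⊆ Finset.range n) (f : Fin n → ℕ)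
    (hstep : ∀ (i : ℕ) (hi : i + 1 < n), f ⟨i + 1, hi⟩ ≤ f ⟨i, by omega⟩)
    (hstrict : ∀ (i : ℕ) (hi : i + 1 < n), (i + 1) ∈ P → f ⟨i + 1, hi⟩ < f ⟨i, by omega⟩) :
    ∀ i j : Fin n, i ≤ j →
      f j - ((P.filter fun d => (j : ℕ) < d).card) ≤ f i - ((P.filter fun d => (i : ℕ) < d).card) := by
  refine antitone_of_succ _ ?_
  intro i hi
  show f ⟨i + 1, hi⟩ - ((P.filter fun d => i + 1 < d).card)
      ≤ f ⟨i, by omega⟩ - ((P.filter fun d => i < d).card)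
  have hs := card_filter_lt_succ P i
  have h1 := card_bound P hP f hstep hstrict ⟨i, by omega⟩
  have h2 := card_bound P hP f hstep hstrict ⟨i + 1, hi⟩
  have h3 := hstep i hi
  by_cases hmem : (i + 1) ∈ P
  · have h4 := hstrict i hi hmem
    rw [if_pos hmem] at hs
    omega
  · rw [if_neg hmem] at hs
    omega


lemma Fmap_surj {g : Fin n → ℕ × ℕ} (hg : StrictAnti fun i => toLex (g i)) :
    ∃ t : Equiv.Perm (Fin n) × PartN n × PartN n, Fmap n t = g := by
  classical
  set X : Fin n → ℕ := fun i => (g i).1 with hX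
  set Y : Fin n → ℕ := fun i => (g i).2 with hY
  set B : ℕ := Finset.univ.sup Y with hB
  have hYB : ∀ i, Y i ≤ B := fun i => Finset.le_sup (Finset.mem_univ i)
  set key : Fin n → Lex (ℕ × ℕ) := fun i => toLex (B - Y i, n - (i : ℕ)) with hkey
  have hkeyinj : Function.Injective key := by
    intro a b hab
    simp only [hkey] at hab
    have h1 : B - Y a = B - Y b ∧ n - (a : ℕ) = n - (b : ℕ) := by
      have h2 := congrArg ofLex hab
      exact ⟨congrArg Prod.fst h2, congrArg Prod.snd h2⟩
    have ha := a.2; have hb := b.2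
    exact Fin.ext (by omega)
  have hkeylt : ∀ a b : Fin n, key a < key b ↔ (Y b < Y a ∨ (Y a = Y b ∧ b < a)) := by
    intro a b
    simp only [hkey]
    rw [Prod.Lex.lt_iff]
    simp only [ofLex_toLex]
    have h1 := hYB a; have h2 := hYB b; have ha := a.2; have hb := b.2
    constructor
    · rintro (h | ⟨hh1, hh2⟩)
      · left; omega
      · right; exact ⟨by omega, Fin.lt_def.2 (by omega)⟩
    · rintro (h | ⟨hh1, hh2⟩)
      · left; omega
      · have := Fin.lt_def.1 hh2
        right; exact ⟨by omega, by omega⟩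
  have hsm : StrictMono (key ∘ Tuple.sort key) :=
    (Tuple.monotone_sort key).strictMono_of_injective (hkeyinj.comp (Tuple.sort key).injective)
  set σ : Equiv.Perm (Fin n) := (Tuple.sort key)⁻¹ with hσ
  have hcharkey : ∀ i j : Fin n, σ i < σ j ↔ key i < key j := by
    intro i j
    have e : ∀ i : Fin n, (key ∘ Tuple.sort key) (σ i) = key i := fun i => by
      simp [hσ, Function.comp]
    rw [← e i, ← e j, hsm.lt_iff_lt]
  have hchar : ∀ i j : Fin n, σ i < σ j ↔ (Y j < Y i ∨ (Y i = Y j ∧ j < i)) := by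
    intro i j; rw [hcharkey, hkeylt]
  -- descent characterization
  have hdesc : ∀ (i : ℕ) (hi : i + 1 < n),
      ((i + 1) ∈ descSet σ ↔ Y ⟨i, by omega⟩ ≤ Y ⟨i + 1, hi⟩) := by
    intro i hi
    rw [mem_descSet_succ hi, hchar]
    constructor
    · rintro (h | ⟨hh1, hh2⟩)
      · exact h.le
      · exact le_of_eq hh1.symm
    · intro h
      rcases lt_or_eq_of_le h with h' | h'
      · exact Or.inl h'
      · exact Or.inr ⟨h'.symm, Fin.lt_def.2 (by simp)⟩
  -- lex facts about g
  have hglex : ∀ (i : ℕ) (hi : i + 1 < n),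
      X ⟨i + 1, hi⟩ < X ⟨i, by omega⟩ ∨
        (X ⟨i + 1, hi⟩ = X ⟨i, by omega⟩ ∧ Y ⟨i + 1, hi⟩ < Y ⟨i, by omega⟩) := by
    intro i hi
    have hlt : (⟨i, by omega⟩ : Fin n) < ⟨i + 1, hi⟩ := Fin.lt_def.2 (by simp)
    have := hg hlt
    dsimp only at this
    rw [Prod.Lex.lt_iff] at this
    exact this
  have hXstep : ∀ (i : ℕ) (hi : i + 1 < n), X ⟨i + 1, hi⟩ ≤ X ⟨i, by omega⟩ := by
    intro i hi
    rcases hglex i hi with h | ⟨h, -⟩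
    · exact h.le
    · exact le_of_eq h
  have hXstrict : ∀ (i : ℕ) (hi : i + 1 < n), (i + 1) ∈ descSet σ →
      X ⟨i + 1, hi⟩ < X ⟨i, by omega⟩ := by
    intro i hi hmem
    rcases hglex i hi with h | ⟨-, h⟩
    · exact h
    · have := (hdesc i hi).1 hmem
      omega
  -- W facts
  set W : Fin n → ℕ := fun v => Y (σ⁻¹ v) with hW
  have hWstep : ∀ (i : ℕ) (hi : i + 1 < n), W ⟨i + 1, hi⟩ ≤ W ⟨i, by omega⟩ := by
    intro i hi
    have hlt : σ (σ⁻¹ ⟨i, by omega⟩) < σ (σ⁻¹ ⟨i + 1, hi⟩) := by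
      simp only [Equiv.Perm.coe_inv, Equiv.apply_symm_apply]
      exact Fin.lt_def.2 (by simp)
    rcases (hchar _ _).1 hlt with h | ⟨hh1, -⟩
    · exact h.le
    · exact le_of_eq hh1.symm
  have hWstrict : ∀ (i : ℕ) (hi : i + 1 < n), (i + 1) ∈ ascSet σ⁻¹ →
      W ⟨i + 1, hi⟩ < W ⟨i, by omega⟩ := by
    intro i hi hmem
    have h1 : σ⁻¹ ⟨i, by omega⟩ < σ⁻¹ ⟨i + 1, hi⟩ := (mem_ascSet_succ hi).1 hmem
    have hlt : σ (σ⁻¹ ⟨i, by omega⟩) < σ (σ⁻¹ ⟨i + 1, hi⟩) := by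
      simp only [Equiv.Perm.coe_inv, Equiv.apply_symm_apply]
      exact Fin.lt_def.2 (by simp)
    rcases (hchar _ _).1 hlt with h | ⟨-, hh2⟩
    · exact h
    · exact absurd hh2 (not_lt.2 h1.le)
  -- the partitions
  have hcntD := card_bound (descSet σ) (descSet_subset σ) X hXstep hXstrict
  have hcntA := card_bound (ascSet σ⁻¹) (ascSet_subset σ⁻¹) W hWstep hWstrict
  refine ⟨(σ,
    ⟨fun i => X i - ((descSet σ).filter fun d => (i : ℕ) < d).card,
      sub_antitone (descSet σ) (descSet_subset σ) X hXstep hXstrict⟩,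
    ⟨fun v => W v - ((ascSet σ⁻¹).filter fun r => (v : ℕ) < r).card,
      sub_antitone (ascSet σ⁻¹) (ascSet_subset σ⁻¹) W hWstep hWstrict⟩), ?_⟩
  funext i
  have hfst : X i - ((descSet σ).filter fun d => (i : ℕ) < d).card
      + ((descSet σ).filter fun d => (i : ℕ) < d).card = X i :=
    Nat.sub_add_cancel (hcntD i)
  have hsnd : W (σ i) - ((ascSet σ⁻¹).filter fun r => ((σ i : Fin n) : ℕ) < r).card
      + ((ascSet σ⁻¹).filter fun r => ((σ i : Fin n) : ℕ) < r).card = Y i := by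
    rw [Nat.sub_add_cancel (hcntA (σ i))]
    simp [hW]
  simp only [Fmap]
  rw [hfst, hsnd]


lemma strictAnti_inj {g : Fin n → ℕ × ℕ} (ha : StrictAnti fun i => toLex (g i)) :
    Function.Injective g := by
  intro a b hab
  exact ha.injective (show toLex (g a) = toLex (g b) by rw [hab])

lemma finset_eqs {g : Fin n → ℕ × ℕ} (ha : StrictAnti fun i => toLex (g i)) :
    (Finset.image g Finset.univ).card = n ∧
    (∑ p ∈ Finset.image g Finset.univ, p.1) = ∑ i : Fin n, (g i).1 ∧
    (∑ p ∈ Finset.image g Finset.univ, p.2) = ∑ i : Fin n, (g i).2 := by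
  have ginj := strictAnti_inj ha
  refine ⟨?_, ?_, ?_⟩
  · rw [Finset.card_image_of_injective _ ginj, Finset.card_univ, Fintype.card_fin]
  · rw [Finset.sum_image (fun x _ y _ h => ginj h)]
  · rw [Finset.sum_image (fun x _ y _ h => ginj h)]

lemma G_injOn {g g' : Fin n → ℕ × ℕ} (ha : StrictAnti fun i => toLex (g i))
    (ha' : StrictAnti fun i => toLex (g' i))
    (he : Finset.image g Finset.univ = Finset.image g' Finset.univ) : g = g' := by
  have hf : StrictMono fun x : Fin n => toLex (g (Fin.rev x)) := by
    intro a b hab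
    exact ha (Fin.rev_lt_rev.2 hab)
  have hf' : StrictMono fun x : Fin n => toLex (g' (Fin.rev x)) := by
    intro a b hab
    exact ha' (Fin.rev_lt_rev.2 hab)
  have hcard : (Finset.image (fun x : Fin n => toLex (g x)) Finset.univ).card = n := by
    rw [Finset.card_image_of_injective _ (fun a b hab => strictAnti_inj ha (toLex.injective hab)),
      Finset.card_univ, Fintype.card_fin]
  have hss : Finset.image (fun x : Fin n => toLex (g' x)) Finset.univ
      = Finset.image (fun x : Fin n => toLex (g x)) Finset.univ := by
    have e1 : Finset.image (fun x : Fin n => toLex (g x)) Finset.univ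
        = Finset.image toLex (Finset.image g Finset.univ) := by
      rw [Finset.image_image]; rfl
    have e2 : Finset.image (fun x : Fin n => toLex (g' x)) Finset.univ
        = Finset.image toLex (Finset.image g' Finset.univ) := by
      rw [Finset.image_image]; rfl
    rw [e1, e2, he]
  have h1 := Finset.orderEmbOfFin_unique hcard
      (f := fun x : Fin n => toLex (g (Fin.rev x)))
      (fun x => Finset.mem_image.2 ⟨Fin.rev x, Finset.mem_univ _, rfl⟩) hf
  have h2 := Finset.orderEmbOfFin_unique hcard
      (f := fun x : Fin n => toLex (g' (Fin.rev x)))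
      (fun x => by rw [← hss]; exact Finset.mem_image.2 ⟨Fin.rev x, Finset.mem_univ _, rfl⟩) hf'
  funext i
  have := congrFun (h1.trans h2.symm) (Fin.rev i)
  simp only [Fin.rev_rev] at this
  exact toLex.injective this

lemma seq_of_finset (S : Finset (ℕ × ℕ)) (hcard : S.card = n) :
    ∃ g : Fin n → ℕ × ℕ, StrictAnti (fun i => toLex (g i)) ∧ Finset.image g Finset.univ = S ∧
      (∑ i : Fin n, (g i).1) = ∑ p ∈ S, p.1 ∧ (∑ i : Fin n, (g i).2) = ∑ p ∈ S, p.2 := by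
  classical
  set S' : Finset (Lex (ℕ × ℕ)) := S.map ⟨toLex, toLex.injective⟩ with hS'
  have hc' : S'.card = n := by rw [hS', Finset.card_map]; exact hcard
  set e := S'.orderEmbOfFin hc' with he
  refine ⟨fun i => ofLex (e (Fin.rev i)), ?_, ?_, ?_, ?_⟩
  · intro a b hab
    show toLex (ofLex (e (Fin.rev b))) < toLex (ofLex (e (Fin.rev a)))
    simp only [toLex_ofLex]
    exact e.strictMono (Fin.rev_lt_rev.2 hab)
  · ext p
    simp only [Finset.mem_image, Finset.mem_univ, true_and]
    constructor
    · rintro ⟨i, rfl⟩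
      have hmem : e (Fin.rev i) ∈ S' := Finset.orderEmbOfFin_mem S' hc' (Fin.rev i)
      rw [hS', Finset.mem_map] at hmem
      obtain ⟨a, haS, hae⟩ := hmem
      have hpe : ofLex (e (Fin.rev i)) = a := by
        rw [← hae]; rfl
      rw [hpe]; exact haS
    · intro hp
      have hmem : toLex p ∈ S' := by
        rw [hS', Finset.mem_map]
        exact ⟨p, hp, rfl⟩
      have hrange : toLex p ∈ Set.range e := by
        rw [he, Finset.range_orderEmbOfFin]
        exact hmem
      obtain ⟨a, ha⟩ := hrange
      exact ⟨Fin.rev a, by rw [Fin.rev_rev, ha]; rfl⟩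
  · have hre : ∑ i : Fin n, (ofLex (e (Fin.rev i))).1 = ∑ i : Fin n, (ofLex (e i)).1 :=
      Equiv.sum_comp Fin.revPerm (fun i => (ofLex (e i)).1)
    rw [hre]
    have h1 : ∑ i : Fin n, (ofLex (e i)).1 = ∑ x ∈ S', (ofLex x).1 := by
      refine Finset.sum_bij (fun a _ => e a) (fun a _ => Finset.orderEmbOfFin_mem S' hc' a)
        (fun a _ b _ h => e.injective h) (fun x hx => ?_) (fun a _ => rfl)
      have : x ∈ Set.range e := by rw [he, Finset.range_orderEmbOfFin]; exact hx
      obtain ⟨a, ha⟩ := this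
      exact ⟨a, Finset.mem_univ a, ha⟩
    rw [h1, hS', Finset.sum_map]
    rfl
  · have hre : ∑ i : Fin n, (ofLex (e (Fin.rev i))).2 = ∑ i : Fin n, (ofLex (e i)).2 :=
      Equiv.sum_comp Fin.revPerm (fun i => (ofLex (e i)).2)
    rw [hre]
    have h1 : ∑ i : Fin n, (ofLex (e i)).2 = ∑ x ∈ S', (ofLex x).2 := by
      refine Finset.sum_bij (fun a _ => e a) (fun a _ => Finset.orderEmbOfFin_mem S' hc' a)
        (fun a _ b _ h => e.injective h) (fun x hx => ?_) (fun a _ => rfl)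
      have : x ∈ Set.range e := by rw [he, Finset.range_orderEmbOfFin]; exact hx
      obtain ⟨a, ha⟩ := this
      exact ⟨a, Finset.mem_univ a, ha⟩
    rw [h1, hS', Finset.sum_map]
    rfl


end Stmt18

/-- The number of `n`-element subsets of `ℕ × ℕ` with coordinate sums `(j,k)` equals
the number of triples `(σ, λ, μ)` with `maj σ + |λ| = j` and
`(n(n-1)/2 - maj σ⁻¹) + |μ| = k`. -/
theorem stmt18 (n : ℕ) (hn : 1 ≤ n) (j k : ℕ) :
    Set.ncard {S : Finset (ℕ × ℕ) | S.card = n ∧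
      (∑ p ∈ S, p.1) = j ∧ (∑ p ∈ S, p.2) = k} =
    Set.ncard {t : Equiv.Perm (Fin n) × PartN n × PartN n |
      maj t.1 + (∑ i : Fin n, t.2.1.1 i) = j ∧
      (n * (n - 1) / 2 - maj t.1⁻¹) + (∑ i : Fin n, t.2.2.1 i) = k} := by
  classical
  set M : Set (Fin n → ℕ × ℕ) := {g | StrictAnti (fun i => toLex (g i)) ∧
    (∑ i : Fin n, (g i).1) = j ∧ (∑ i : Fin n, (g i).2) = k} with hM
  have hRim : Stmt18.Fmap n '' {t : Equiv.Perm (Fin n) × PartN n × PartN n |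
      maj t.1 + (∑ i : Fin n, t.2.1.1 i) = j ∧
      (n * (n - 1) / 2 - maj t.1⁻¹) + (∑ i : Fin n, t.2.2.1 i) = k} = M := by
    ext g
    constructor
    · rintro ⟨t, ⟨ht1, ht2⟩, rfl⟩
      exact ⟨Stmt18.Fmap_strictAnti t, by rw [Stmt18.Fmap_sum_fst]; exact ht1,
        by rw [Stmt18.Fmap_sum_snd]; exact ht2⟩
    · rintro ⟨hanti, h1, h2⟩
      obtain ⟨t, rfl⟩ := Stmt18.Fmap_surj hanti
      exact ⟨t, ⟨by rw [← Stmt18.Fmap_sum_fst]; exact h1,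
        by rw [← Stmt18.Fmap_sum_snd]; exact h2⟩, rfl⟩
  have hLim : (fun g : Fin n → ℕ × ℕ => Finset.image g Finset.univ) '' M =
      {S : Finset (ℕ × ℕ) | S.card = n ∧ (∑ p ∈ S, p.1) = j ∧ (∑ p ∈ S, p.2) = k} := by
    ext S
    constructor
    · rintro ⟨g, ⟨ha, h1, h2⟩, rfl⟩
      obtain ⟨hc, hs1, hs2⟩ := Stmt18.finset_eqs ha
      exact ⟨hc, by rw [hs1]; exact h1, by rw [hs2]; exact h2⟩
    · rintro ⟨hc, h1, h2⟩
      obtain ⟨g, ha, him, hs1, hs2⟩ := Stmt18.seq_of_finset S hc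
      exact ⟨g, ⟨ha, by rw [hs1]; exact h1, by rw [hs2]; exact h2⟩, him⟩
  rw [← hLim]
  rw [Set.ncard_image_of_injOn (fun g hg g' hg' he => Stmt18.G_injOn hg.1 hg'.1 he)]
  rw [← hRim]
  rw [Set.ncard_image_of_injective _ Stmt18.Fmap_injective]
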